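/- Let G = (V,E) be a graph with od_k(G) ≤ 3k for some positive integer k. Then for every vertex v ∈ V, the subgraph of G induced by the neighborhood N(v) of v is 2-colorable. -/

import Mathlib

open Matrix

/-- A graph in which adjacency "flips" a label `f` via an involution `i`
(and never fixes the label) is 2-colorable. -/
lemma flip_colorable {V : Type} (H : SimpleGraph V) {α : Type} (f : V → α) (i : α → α)
    (hinv : ∀ v : V, i (i (f v)) = f v)
    (hadj : ∀ {v w : V}, H.Adj v w → f w = i (f v) ∧ f v ≠ f w) :
    H.Colorable 2 := by
  classical
  have key : ∀ {a b : V} (_ : H.Walk a b), f b = f a ∨ f b = i (f a) := by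
    intro a b p
    induction p with
    | nil => exact Or.inl rfl
    | @cons u x b h p ih =>
      rcases ih with h1 | h1
      · right; rw [h1, (hadj h).1]
      · left; rw [h1, (hadj h).1, hinv]
  refine ⟨SimpleGraph.Coloring.mk
    (fun v => if f v = f (H.connectedComponentMk v).out then 0 else 1) ?_⟩
  intro v w hvw
  have hcomp : H.connectedComponentMk v = H.connectedComponentMk w :=
    SimpleGraph.ConnectedComponent.sound hvw.reachable
  set r := (H.connectedComponentMk v).out with hr
  have hrv : H.Reachable r v := by
    have : H.connectedComponentMk r = H.connectedComponentMk v := by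
      rw [hr]; exact (H.connectedComponentMk v).out_eq
    exact (SimpleGraph.ConnectedComponent.eq).mp this
  have hrw : (H.connectedComponentMk w).out = r := by rw [← hcomp]
  simp only [hrw]
  by_cases hcase : f v = f r
  · have : f w ≠ f r := by
      rw [← hcase]; exact fun hh => (hadj hvw).2 hh.symm
    simp [hcase, this]
  · have hvi : f v = i (f r) := by
      rcases key hrv.some with h1 | h1
      · exact absurd h1 hcase
      · exact h1
    have : f w = f r := by rw [(hadj hvw).1, hvi, hinv]
    simp [hcase, this]

/-- if a graph admits a `3k`-dimensional orthogonal `k`-subspace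
representation, then the subgraph induced on every neighborhood is 2-colorable. -/
theorem neighborhood_two_colorable {V : Type} (G : SimpleGraph V)
    (k : ℕ) (hk : 0 < k)
    (U : V → Submodule ℝ (Fin (3 * k) → ℝ))
    (hdim : ∀ v, Module.finrank ℝ (U v) = k)
    (horth : ∀ v v', G.Adj v v' → ∀ x ∈ U v, ∀ y ∈ U v', x ⬝ᵥ y = 0) :
    ∀ v : V, (G.induce (G.neighborSet v)).Colorable 2 := by
  classical
  intro v
  -- view everything in Euclidean space
  set E := EuclideanSpace ℝ (Fin (3 * k)) with hE
  let U' : V → Submodule ℝ E := fun w => (U w).comap (WithLp.linearEquiv 2 ℝ (Fin (3 * k) → ℝ)).toLinearMap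
  have hdim' : ∀ w, Module.finrank ℝ (U' w) = k := fun w => by
    show Module.finrank ℝ ((U w).comap (WithLp.linearEquiv 2 ℝ (Fin (3 * k) → ℝ)).toLinearMap) = k
    rw [Submodule.comap_equiv_eq_map_symm, LinearEquiv.finrank_map_eq]; exact hdim w
  have horth' : ∀ w w', G.Adj w w' → U' w' ≤ (U' w)ᗮ := by
    intro w w' hww'
    intro y hy
    rw [Submodule.mem_orthogonal]
    intro x hx
    have := horth w w' hww' x hx y hy
    rw [EuclideanSpace.inner_eq_star_dotProduct]
    simpa [dotProduct, mul_comm] using this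
  set W : Submodule ℝ E := (U' v)ᗮ with hW
  have hWdim : Module.finrank ℝ W = 2 * k := by
    have h1 := Submodule.finrank_add_finrank_orthogonal (𝕜 := ℝ) (E := E) (U' v)
    rw [hdim' v, finrank_euclideanSpace_fin, ← hW] at h1
    omega
  -- all neighbors' subspaces lie in W
  have hsub : ∀ w : G.neighborSet v, U' w ≤ W := by
    intro w
    exact horth' v w w.2
  -- the flip
  set i : Submodule ℝ E → Submodule ℝ E := fun S => Sᗮ ⊓ W with hi
  have hflipdim : ∀ S : Submodule ℝ E, S ≤ W → Module.finrank ℝ S = k →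
      Module.finrank ℝ (i S) = k ∧ i S ≤ W := by
    intro S hSW hSk
    constructor
    · have := Submodule.finrank_add_inf_finrank_orthogonal (K₁ := S) (K₂ := W) hSW
      rw [hSk, hWdim] at this
      show Module.finrank ℝ ((Sᗮ ⊓ W : Submodule ℝ E)) = k
      omega
    · exact inf_le_right
  have hne : ∀ {w w' : V}, G.Adj w w' → U' w ≠ U' w' := by
    intro w w' hww' heq
    have hle : U' w ≤ (U' w)ᗮ := heq ▸ horth' w w' hww'
    have : U' w = ⊥ := by
      rw [eq_bot_iff]
      intro x hx
      have h0 : (inner ℝ x x : ℝ) = 0 := (Submodule.mem_orthogonal _ x).mp (hle hx) x hx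
      simpa using inner_self_eq_zero.mp h0
    have hzero : Module.finrank ℝ (U' w) = 0 := by rw [this]; simp
    rw [hdim' w] at hzero
    omega
  apply flip_colorable _ (fun w : G.neighborSet v => U' w) i
  · -- involution
    intro w
    have h1 : U' w ≤ W := hsub w
    have h2 : Module.finrank ℝ (U' w) = k := hdim' w
    obtain ⟨hk1, hle1⟩ := hflipdim (U' w) h1 h2
    obtain ⟨hk2, _⟩ := hflipdim (i (U' w)) hle1 hk1
    have hle : U' w ≤ i (i (U' w)) := by
      apply le_inf _ h1
      calc U' w ≤ (U' w)ᗮᗮ := Submodule.le_orthogonal_orthogonal _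
        _ ≤ (i (U' w))ᗮ := Submodule.orthogonal_le inf_le_left
    exact (Submodule.eq_of_le_of_finrank_eq hle (by rw [h2, hk2])).symm
  · -- adjacency flips
    intro w w' hww'
    have hadj : G.Adj w w' := hww'
    constructor
    · have hle : U' w' ≤ i (U' w) := le_inf (horth' w w' hadj) (hsub w')
      obtain ⟨hk1, _⟩ := hflipdim (U' w) (hsub w) (hdim' w)
      exact Submodule.eq_of_le_of_finrank_eq hle (by rw [hdim' w', hk1])
    · exact hne hadj
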